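/- Let h : [0,∞) → (0,∞) be twice continuously differentiable, nonincreasing, and satisfy h''(z)h(z) ≥ 2(h'(z))² for all z ≥ 0. Let μ > 0 and λ ≥ 0. Then the function F(θ, M) = h(θ)·((μ/2)(M : M) + λ(tr M)²), defined for θ ∈ [0,∞) and 3×3 real matrices M, is jointly convex on [0,∞) × ℝ^{3×3}. -/

import Mathlib

open Set Matrix


private lemma aux_scalar (H h1 h2 a b Q1 Q2 Qc Qm : ℝ)
    (ha : 0 ≤ a) (hb : 0 ≤ b)
    (hApos : 0 < a * h2 + b * h1)
    (hk' : H * (a * h2 + b * h1) ≤ h1 * h2)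
    (hQm : 0 ≤ Qm) (hQmeq : Qm = a ^ 2 * Q1 + 2 * a * b * Qc + b ^ 2 * Q2)
    (hcs : 2 * (h1 * h2) * Qc ≤ h1 ^ 2 * Q1 + h2 ^ 2 * Q2) :
    H * Qm ≤ a * (h1 * Q1) + b * (h2 * Q2) := by
  have key : (a * h2 + b * h1) * (H * Qm) ≤ (a * h2 + b * h1) * (a * (h1 * Q1) + b * (h2 * Q2)) := by
    have h1' : (a * h2 + b * h1) * (H * Qm) ≤ (h1 * h2) * Qm := by
      calc (a * h2 + b * h1) * (H * Qm) = (H * (a * h2 + b * h1)) * Qm := by ring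
        _ ≤ (h1 * h2) * Qm := mul_le_mul_of_nonneg_right hk' hQm
    have h2' : (h1 * h2) * Qm ≤ (a * h2 + b * h1) * (a * (h1 * Q1) + b * (h2 * Q2)) := by
      rw [hQmeq]
      nlinarith [mul_nonneg (mul_nonneg ha hb) (by linarith : (0:ℝ) ≤ h1 ^ 2 * Q1 + h2 ^ 2 * Q2 - 2 * (h1 * h2) * Qc)]
    linarith
  exact le_of_mul_le_mul_left key hApos

set_option maxHeartbeats 1600000 in
/-- If `h : [0,∞) → (0,∞)` is twice continuously differentiable, nonincreasing,
and satisfies `h'' h ≥ 2 (h')²` on `[0,∞)`, and `μ > 0`, `λ ≥ 0`, then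
`F(θ, M) = h(θ)((μ/2)(M : M) + λ(tr M)²)` is jointly convex on `[0,∞) × ℝ^{3×3}`. -/
theorem renormalized_dissipation_convex
    (h h' h'' : ℝ → ℝ) (μ lam : ℝ) (hμ : 0 < μ) (hlam : 0 ≤ lam)
    (hpos : ∀ z ≥ (0 : ℝ), 0 < h z)
    (hd1 : ∀ z ≥ (0 : ℝ), HasDerivAt h (h' z) z)
    (hd2 : ∀ z ≥ (0 : ℝ), HasDerivAt h' (h'' z) z)
    (hd2_cont : ContinuousOn h'' (Ici 0))
    (hmono : AntitoneOn h (Ici 0))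
    (hconv : ∀ z ≥ (0 : ℝ), 2 * (h' z) ^ 2 ≤ h'' z * h z) :
    ConvexOn ℝ ((Ici (0 : ℝ)) ×ˢ (univ : Set (Matrix (Fin 3) (Fin 3) ℝ)))
      (fun p : ℝ × Matrix (Fin 3) (Fin 3) ℝ =>
        h p.1 * ((μ / 2) * (∑ i, ∑ j, p.2 i j * p.2 i j) + lam * (p.2.trace) ^ 2)) := by
  -- `k = 1/h` is concave on `[0,∞)`
  have hne : ∀ z ∈ Ici (0:ℝ), h z ≠ 0 := fun z hz => (hpos z hz).ne'
  have hcont_h : ContinuousOn h (Ici 0) :=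
    fun z hz => (hd1 z hz).continuousAt.continuousWithinAt
  have hcont_k : ContinuousOn (fun z => (h z)⁻¹) (Ici 0) := hcont_h.inv₀ hne
  have hconc : ConcaveOn ℝ (Ici 0) (fun z => (h z)⁻¹) := by
    apply concaveOn_of_hasDerivWithinAt2_nonpos (convex_Ici 0) hcont_k
      (f' := fun z => -(h' z) / (h z) ^ 2)
      (f'' := fun z => (-(h'' z) * (h z) ^ 2 - -(h' z) * (2 * h z ^ 1 * h' z)) / ((h z) ^ 2) ^ 2)
    · intro x hx
      rw [interior_Ici] at hx
      exact ((hd1 x (le_of_lt hx)).inv (hne x (le_of_lt hx : (0:ℝ) ≤ x))).hasDerivWithinAt.mono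
        (by rw [interior_Ici])
    · intro x hx
      rw [interior_Ici] at hx
      have hx0 : (0:ℝ) ≤ x := le_of_lt hx
      exact (((hd2 x hx0).neg.div ((hd1 x hx0).pow 2)
        (pow_ne_zero 2 (hne x hx0)))).hasDerivWithinAt.mono (by rw [interior_Ici])
    · intro x hx
      rw [interior_Ici] at hx
      have hx0 : (0:ℝ) ≤ x := le_of_lt hx
      apply div_nonpos_of_nonpos_of_nonneg
      · nlinarith [hconv x hx0, hpos x hx0]
      · positivity
  constructor
  · exact (convex_Ici 0).prod convex_univ
  intro p hp q hq a b ha hb hab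
  have hθ1 : (0:ℝ) ≤ p.1 := hp.1
  have hθ2 : (0:ℝ) ≤ q.1 := hq.1
  have hθ : (0:ℝ) ≤ a * p.1 + b * q.1 := add_nonneg (mul_nonneg ha hθ1) (mul_nonneg hb hθ2)
  set SM := ∑ i, ∑ j, p.2 i j * p.2 i j with hSM
  set SB := ∑ i, ∑ j, p.2 i j * q.2 i j with hSB
  set SN := ∑ i, ∑ j, q.2 i j * q.2 i j with hSN
  have expand : ∀ c d : ℝ,
      ∑ i, ∑ j, (c * p.2 i j + d * q.2 i j) * (c * p.2 i j + d * q.2 i j)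
        = c ^ 2 * SM + 2 * c * d * SB + d ^ 2 * SN := by
    intro c d
    rw [hSM, hSB, hSN]
    simp only [Finset.mul_sum, ← Finset.sum_add_distrib]
    exact Finset.sum_congr rfl fun i _ => Finset.sum_congr rfl fun j _ => by ring
  have hQ : ∀ c d : ℝ, 0 ≤ c ^ 2 * SM + 2 * c * d * SB + d ^ 2 * SN := by
    intro c d
    rw [← expand c d]
    exact Finset.sum_nonneg fun i _ => Finset.sum_nonneg fun j _ => mul_self_nonneg _
  set tM := p.2.trace with htM
  set tN := q.2.trace with htN
  have hQF : ∀ c d : ℝ,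
      0 ≤ μ / 2 * (c ^ 2 * SM + 2 * c * d * SB + d ^ 2 * SN) + lam * (c * tM + d * tN) ^ 2 :=
    fun c d => add_nonneg (mul_nonneg (by positivity) (hQ c d)) (mul_nonneg hlam (sq_nonneg _))
  -- rewrite the goal in scalar form
  have hgfst : (a • p + b • q).1 = a * p.1 + b * q.1 := rfl
  have hgsnd : ∀ i j, (a • p + b • q).2 i j = a * p.2 i j + b * q.2 i j := fun i j => rfl
  have hgtr : (a • p + b • q).2.trace = a * tM + b * tN := by
    show (a • p.2 + b • q.2).trace = _
    rw [Matrix.trace_add, Matrix.trace_smul, Matrix.trace_smul, smul_eq_mul, smul_eq_mul]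
  simp only [smul_eq_mul, hgfst, hgtr]
  have hsum : ∑ i, ∑ j, (a • p + b • q).2 i j * (a • p + b • q).2 i j
      = a ^ 2 * SM + 2 * a * b * SB + b ^ 2 * SN := by
    rw [← expand a b]
    exact Finset.sum_congr rfl fun i _ => Finset.sum_congr rfl fun j _ => by rw [hgsnd]
  rw [hsum]
  -- scalar inequality
  set h1 := h p.1 with hh1
  set h2 := h q.1 with hh2
  set H := h (a * p.1 + b * q.1) with hH
  have h1pos : 0 < h1 := hpos _ hθ1
  have h2pos : 0 < h2 := hpos _ hθ2
  have hHpos : 0 < H := hpos _ hθ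
  have hk : a * h1⁻¹ + b * h2⁻¹ ≤ H⁻¹ := by
    have := hconc.2 hp.1 hq.1 ha hb hab
    simpa [smul_eq_mul] using this
  have hk' : H * (a * h2 + b * h1) ≤ h1 * h2 := by
    have e1 : a * h2 + b * h1 = h1 * h2 * (a * h1⁻¹ + b * h2⁻¹) := by
      field_simp
    calc H * (a * h2 + b * h1) = H * (h1 * h2) * (a * h1⁻¹ + b * h2⁻¹) := by rw [e1]; ring
      _ ≤ H * (h1 * h2) * H⁻¹ := by
          apply mul_le_mul_of_nonneg_left hk
          positivity
      _ = h1 * h2 := by field_simp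
  have hApos : 0 < a * h2 + b * h1 := by
    rcases le_total h1 h2 with hle | hle
    · nlinarith [mul_le_mul_of_nonneg_left hle ha]
    · nlinarith [mul_le_mul_of_nonneg_left hle hb]
  have final := aux_scalar H h1 h2 a b (μ / 2 * SM + lam * tM ^ 2) (μ / 2 * SN + lam * tN ^ 2)
    (μ / 2 * SB + lam * (tM * tN))
    (μ / 2 * (a ^ 2 * SM + 2 * a * b * SB + b ^ 2 * SN) + lam * (a * tM + b * tN) ^ 2)
    ha hb hApos hk' (hQF a b) (by ring) (by nlinarith [hQF h1 (-h2)])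
  linarith [final]
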